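/- The entries a_{ij} of b⁻¹ satisfy the following 2×2 cofactor identities: a₀₀a₁₁ − a₀₁² = a₁₁; a₀₀a₂₂ − a₀₂² = 1/B; a₀₀a₃₃ − a₀₃² = sin²(π/v)/B; a₁₁a₃₃ − a₁₃² = 1/B; and a₂₂a₃₃ − a₂₃² = a₂₂. -/

import Mathlib

open Real Matrix

/-- The Coxeter–Schläfli matrix of the complete orthoscheme `W_{uvw}`. -/
noncomputable def CSmatrix (u v w : ℝ) : Matrix (Fin 4) (Fin 4) ℝ :=
  !![1, -cos (π/u), 0, 0;
     -cos (π/u), 1, -cos (π/v), 0;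
     0, -cos (π/v), 1, -cos (π/w);
     0, 0, -cos (π/w), 1]

/-- The inverse of the Coxeter–Schläfli matrix; its entries are the `a_{ij}`. -/
noncomputable def CSinv (u v w : ℝ) : Matrix (Fin 4) (Fin 4) ℝ :=
  (CSmatrix u v w)⁻¹

noncomputable def CSadj (u v w : ℝ) : Matrix (Fin 4) (Fin 4) ℝ :=
  let a := cos (π/u); let b := cos (π/v); let c := cos (π/w)
  !![1 - b^2 - c^2, a*(1-c^2), a*b, a*b*c;
     a*(1-c^2), 1 - c^2, b, b*c;
     a*b, b, 1 - a^2, c*(1-a^2);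
     a*b*c, b*c, c*(1-a^2), 1 - a^2 - b^2]

lemma CSdet (u v w : ℝ) :
    (CSmatrix u v w).det =
      1 - cos (π/u)^2 - cos (π/v)^2 - cos (π/w)^2 + cos (π/u)^2 * cos (π/w)^2 := by
  simp [CSmatrix, Matrix.det_succ_row_zero, Fin.sum_univ_succ, Fin.succAbove]
  ring

lemma CSmul (u v w : ℝ) :
    CSmatrix u v w * CSadj u v w = (CSmatrix u v w).det • 1 := by
  rw [CSdet]
  ext i j
  fin_cases i <;> fin_cases j <;>
    simp [CSmatrix, CSadj, Matrix.mul_apply, Fin.sum_univ_four, Matrix.one_apply] <;> ring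

lemma CSinv_eq (u v w : ℝ) (hdet : (CSmatrix u v w).det ≠ 0) :
    CSinv u v w = ((CSmatrix u v w).det)⁻¹ • CSadj u v w := by
  apply Matrix.inv_eq_right_inv
  rw [Matrix.mul_smul, CSmul, smul_smul, inv_mul_cancel₀ hdet, one_smul]

theorem stmt2 (u v w : ℝ) (hu : 3 ≤ u) (hv : 3 ≤ v) (hw : 3 ≤ w)
    (hdet : (CSmatrix u v w).det ≠ 0) :
    CSinv u v w 0 0 * CSinv u v w 1 1 - (CSinv u v w 0 1) ^ 2 = CSinv u v w 1 1 ∧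
    CSinv u v w 0 0 * CSinv u v w 2 2 - (CSinv u v w 0 2) ^ 2 = 1 / (CSmatrix u v w).det ∧
    CSinv u v w 0 0 * CSinv u v w 3 3 - (CSinv u v w 0 3) ^ 2 =
      sin (π/v) ^ 2 / (CSmatrix u v w).det ∧
    CSinv u v w 1 1 * CSinv u v w 3 3 - (CSinv u v w 1 3) ^ 2 = 1 / (CSmatrix u v w).det ∧
    CSinv u v w 2 2 * CSinv u v w 3 3 - (CSinv u v w 2 3) ^ 2 = CSinv u v w 2 2 := by
  have hD := CSdet u v w
  have hinv := CSinv_eq u v w hdet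
  have hsin : sin (π/v) ^ 2 = 1 - cos (π/v) ^ 2 := Real.sin_sq _
  rw [hD] at hdet
  simp only [hinv, CSadj, Matrix.smul_apply, smul_eq_mul, hD, hsin]
  norm_num [Matrix.cons_val_zero, Matrix.cons_val_one, Matrix.cons_val_two, Matrix.vecHead, Matrix.vecTail, Matrix.cons_val_three]
  refine ⟨?_, ?_, ?_, ?_, ?_⟩ <;> field_simp <;> ring
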